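/- Let η be a regular uncountable cardinal such that the set of measurable cardinals below η is stationary in η. Then for every uncountable regular cardinal δ with δ < η, η is δ-Erdős. -/

import Mathlib

open FirstOrder Cardinal Ordinal

/-- The order type of a subset of a well-ordered type, as an ordinal. -/
noncomputable def setOrderType {α : Type*} [LinearOrder α] [WellFoundedLT α]
    (s : Set α) : Ordinal :=
  haveI : IsWellOrder _ (Subrel ((· < ·) : α → α → Prop) s) :=
    inferInstanceAs (IsWellOrder _ (Subrel ((· < ·) : α → α → Prop) (fun x => x ∈ s)))
  Ordinal.type (Subrel ((· < ·) : α → α → Prop) s)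

/-- The ordinal rank of an element of a well-ordered type. -/
noncomputable def ordRank {α : Type*} [LinearOrder α] [WellFoundedLT α] (a : α) : Ordinal :=
  @Ordinal.typein α (· < ·) isWellOrder_lt a

/-- `f` is an `n`-ary function definable in the structure `M` from parameters in `A`. -/
def DefinableFun (L : FirstOrder.Language.{0, 0}) {M : Type} [L.Structure M] (A : Set M)
    (n : ℕ) (f : (Fin n → M) → M) : Prop :=
  A.Definable L {x : Fin (n + 1) → M | x (Fin.last n) = f (fun i => x i.castSucc)}

/-- `C` is a closed unbounded subset (of a linear order standing for a cardinal `κ`). -/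
def IsClubIn {α : Type*} [LinearOrder α] (C : Set α) : Prop :=
  (∀ b : α, ∃ c ∈ C, b ≤ c) ∧
  ∀ a : α, (∃ b, b < a) → (∀ b < a, ∃ c ∈ C, b < c ∧ c < a) → a ∈ C

/-- `D` is a normal set of indiscernibles for the structure `M`: every definable
(without parameters) function `f` either satisfies `f d⃗ ≥ d₀` on all increasing tuples
from `D`, or is constant on all such tuples. -/
def IsNormalIndiscernibles (L : FirstOrder.Language.{0, 0}) {M : Type} [L.Structure M]
    [LinearOrder M] (D : Set M) : Prop :=
  ∀ (n : ℕ) (f : (Fin (n + 1) → M) → M), DefinableFun L (∅ : Set M) (n + 1) f →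
    (∀ d : Fin (n + 1) → M, StrictMono d → (∀ i, d i ∈ D) → d 0 ≤ f d) ∨
    ∃ y : M, ∀ d : Fin (n + 1) → M, StrictMono d → (∀ i, d i ∈ D) → f d = y

/-- `κ` is `δ`-Erdős: for every structure in a countable language whose universe is
(a canonical type of order type) `κ` and every closed unbounded set `C`, there is a
`D ⊆ C` of order type `δ` which is a normal set of indiscernibles for the structure. -/
def IsErdos (δ κ : Cardinal.{0}) : Prop :=
  ∀ (L : FirstOrder.Language.{0, 0}) [L.Structure κ.ord.ToType], Countable L.Symbols →
    ∀ C : Set κ.ord.ToType, IsClubIn C →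
      ∃ D ⊆ C, setOrderType D = δ.ord ∧ IsNormalIndiscernibles L D

/-- `μ` is a measurable cardinal: `μ` is uncountable and there is a nonprincipal
ultrafilter on (a canonical type of order type) `μ` closed under intersections of
families of fewer than `μ` of its members. -/
def IsMeasurableCard (μ : Cardinal.{0}) : Prop :=
  ℵ₀ < μ ∧ ∃ U : Ultrafilter μ.ord.ToType,
    (∀ a : μ.ord.ToType, {a} ∉ U) ∧
    ∀ s : Set (Set μ.ord.ToType), (∀ t ∈ s, t ∈ U) → #s < μ → ⋂₀ s ∈ U

instance instIsWellOrderSubrelSet {α : Type*} [LinearOrder α] [WellFoundedLT α] (s : Set α) :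
    IsWellOrder _ (Subrel ((· < ·) : α → α → Prop) s) :=
  inferInstanceAs (IsWellOrder _ (Subrel ((· < ·) : α → α → Prop) (fun x => x ∈ s)))

section WO
variable {M : Type} [LinearOrder M] [WellFoundedLT M]

/-- Least upper bound of a bounded set in a well-order. -/
noncomputable def mylub (s : Set M) (hbd : ∃ u, ∀ y ∈ s, y ≤ u) : M :=
  (IsWellFounded.wf (r := ((· < ·) : M → M → Prop))).min {u | ∀ y ∈ s, y ≤ u} hbd

theorem le_mylub {s : Set M} (hbd : ∃ u, ∀ y ∈ s, y ≤ u) {y : M} (hy : y ∈ s) :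
    y ≤ mylub s hbd :=
  (IsWellFounded.wf).min_mem {u | ∀ y ∈ s, y ≤ u} hbd y hy

theorem lt_mylub {s : Set M} (hbd : ∃ u, ∀ y ∈ s, y ≤ u) {b : M} (hb : b < mylub s hbd) :
    ∃ y ∈ s, b < y := by
  have h1 : ¬ (∀ y ∈ s, y ≤ b) := fun h =>
    (IsWellFounded.wf (r := ((· < ·) : M → M → Prop))).not_lt_min {u | ∀ y ∈ s, y ≤ u} h hb
  push_neg at h1
  obtain ⟨y, hy, h⟩ := h1
  exact ⟨y, hy, h⟩

theorem mylub_le {s : Set M} (hbd : ∃ u, ∀ y ∈ s, y ≤ u) {u : M} (hu : ∀ y ∈ s, y ≤ u) :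
    mylub s hbd ≤ u := by
  by_contra h
  obtain ⟨y, hy, hlt⟩ := lt_mylub hbd (not_le.1 h)
  exact absurd (hu y hy) (not_le.2 hlt)

/-- Diagonal intersections from normality. -/
theorem diag_of_normal {U : Ultrafilter M}
    (hnorm : ∀ g : M → M, {x | g x < x} ∈ U → ∃ y, {x | g x = y} ∈ U)
    (A : M → Set M) (hA : ∀ b, A b ∈ U) :
    {x | ∀ b < x, x ∈ A b} ∈ U := by
  by_contra h
  have hc : {x | ∀ b < x, x ∈ A b}ᶜ ∈ U := Ultrafilter.compl_mem_iff_notMem.2 h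
  have hbad : ∀ x ∈ {x | ∀ b < x, x ∈ A b}ᶜ, ∃ b, b < x ∧ x ∉ A b := by
    intro x hx
    simp only [Set.mem_compl_iff, Set.mem_setOf_eq, not_forall] at hx
    obtain ⟨b, hb, hnb⟩ := hx
    exact ⟨b, hb, hnb⟩
  classical
  set g : M → M := fun x => if hx : ∃ b, b < x ∧ x ∉ A b then hx.choose else x with hg
  have hglt : {x | g x < x} ∈ U := by
    refine Filter.mem_of_superset hc fun x hx => ?_
    obtain ⟨b, hb, hnb⟩ := hbad x hx
    have he : ∃ b, b < x ∧ x ∉ A b := ⟨b, hb, hnb⟩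
    simp only [Set.mem_setOf_eq, hg, dif_pos he]
    exact he.choose_spec.1
  obtain ⟨y, hy⟩ := hnorm g hglt
  obtain ⟨x, hx⟩ := Ultrafilter.nonempty_of_mem
    (Filter.inter_mem (Filter.inter_mem hc hy) (hA y))
  obtain ⟨⟨hx1, hx2⟩, hx3⟩ := hx
  have he : ∃ b, b < x ∧ x ∉ A b := hbad x hx1
  have : g x = he.choose := dif_pos he
  have hgx : g x = he.choose := dif_pos he
  have hyy : y = he.choose := by rw [← hgx]; exact hx2.symm
  exact he.choose_spec.2 (hyy ▸ hx3)

end WO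

section Row
variable {M : Type} [LinearOrder M] [WellFoundedLT M]

set_option maxHeartbeats 1000000 in
theorem rowbottom {U : Ultrafilter M}
    (hnorm : ∀ g : M → M, {x | g x < x} ∈ U → ∃ y, {x | g x = y} ∈ U) :
    ∀ (n : ℕ) (f : (Fin (n + 1) → M) → M),
      ∃ H, H ∈ U ∧
        ((∀ d : Fin (n + 1) → M, StrictMono d → (∀ i, d i ∈ H) → d 0 ≤ f d) ∨
        ∃ y, ∀ d : Fin (n + 1) → M, StrictMono d → (∀ i, d i ∈ H) → f d = y) := by
  intro n
  induction n with
  | zero =>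
    intro f
    set g : M → M := fun x => f (fun _ => x) with hg
    have key : ∀ d : Fin 1 → M, f d = g (d 0) := by
      intro d
      simp only [hg]
      congr 1
      funext i
      have : i = 0 := Subsingleton.elim _ _
      rw [this]
    rcases em ({x | g x < x} ∈ U) with hlt | hge
    · obtain ⟨y, hy⟩ := hnorm g hlt
      refine ⟨_, hy, Or.inr ⟨y, ?_⟩⟩
      intro d _ hd
      rw [key d]
      exact hd 0
    · have hmem : {x | x ≤ g x} ∈ U := by
        have h2 := Ultrafilter.compl_mem_iff_notMem.2 hge
        have : {x | g x < x}ᶜ = {x | x ≤ g x} := by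
          ext x; simp [not_lt]
        rwa [this] at h2
      refine ⟨_, hmem, Or.inl fun d _ hd => ?_⟩
      rw [key d]
      exact hd 0
  | succ n IH =>
    intro f
    classical
    have hch : ∀ a : M, ∃ H, H ∈ U ∧
        ((∀ d : Fin (n + 1) → M, StrictMono d → (∀ i, d i ∈ H) →
            d 0 ≤ f (Fin.cons a d)) ∨
        ∃ y, ∀ d : Fin (n + 1) → M, StrictMono d → (∀ i, d i ∈ H) →
            f (Fin.cons a d) = y) :=
      fun a => IH (fun d => f (Fin.cons a d))
    choose Ha hHa hdich using hch
    have hdiag : {x | ∀ b < x, x ∈ Ha b} ∈ U := diag_of_normal hnorm Ha hHa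
    -- facts about tails
    have htail : ∀ d : Fin (n + 2) → M, StrictMono d →
        (∀ i, d i ∈ {x | ∀ b < x, x ∈ Ha b}) →
        StrictMono (Fin.tail d) ∧ (∀ i, Fin.tail d i ∈ Ha (d 0)) ∧
          f d = f (Fin.cons (d 0) (Fin.tail d)) ∧ d 0 ≤ Fin.tail d 0 := by
      intro d hd hmem
      refine ⟨fun i j hij => hd (by simpa using hij), fun i => ?_, by rw [Fin.cons_self_tail],
        le_of_lt (hd (Fin.succ_pos 0))⟩
      have h1 : d 0 < d i.succ := hd (Fin.succ_pos i)
      exact hmem i.succ (d 0) h1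
    set L : Set M := {a | ∀ d : Fin (n + 1) → M, StrictMono d → (∀ i, d i ∈ Ha a) →
        d 0 ≤ f (Fin.cons a d)} with hL
    rcases em (L ∈ U) with hLU | hLU
    · refine ⟨L ∩ {x | ∀ b < x, x ∈ Ha b}, Filter.inter_mem hLU hdiag, Or.inl ?_⟩
      intro d hd hmem
      obtain ⟨ht1, ht2, ht3, ht4⟩ := htail d hd (fun i => (hmem i).2)
      have := (hmem 0).1 (Fin.tail d) ht1 ht2
      rw [ht3]
      exact le_trans ht4 this
    · have hLc : Lᶜ ∈ U := Ultrafilter.compl_mem_iff_notMem.2 hLU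
      set y' : M → M := fun a =>
        if h : ∃ y, ∀ d : Fin (n + 1) → M, StrictMono d → (∀ i, d i ∈ Ha a) →
            f (Fin.cons a d) = y then h.choose else a with hy'
      have hy'spec : ∀ a ∈ Lᶜ, ∀ d : Fin (n + 1) → M, StrictMono d →
          (∀ i, d i ∈ Ha a) → f (Fin.cons a d) = y' a := by
        intro a ha d hd hmem
        have h := (hdich a).resolve_left ha
        simp only [hy', dif_pos h]
        exact h.choose_spec d hd hmem
      rcases em ({x | y' x < x} ∈ U) with hreg | hreg
      · obtain ⟨c, hc⟩ := hnorm y' hreg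
        refine ⟨Lᶜ ∩ {x | y' x = c} ∩ {x | ∀ b < x, x ∈ Ha b},
          Filter.inter_mem (Filter.inter_mem hLc hc) hdiag, Or.inr ⟨c, ?_⟩⟩
        intro d hd hmem
        obtain ⟨ht1, ht2, ht3, _⟩ := htail d hd (fun i => (hmem i).2)
        rw [ht3, hy'spec (d 0) (hmem 0).1.1 (Fin.tail d) ht1 ht2]
        exact (hmem 0).1.2
      · have hge : {x | x ≤ y' x} ∈ U := by
          have h2 := Ultrafilter.compl_mem_iff_notMem.2 hreg
          have : {x | y' x < x}ᶜ = {x | x ≤ y' x} := by ext x; simp [not_lt]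
          rwa [this] at h2
        refine ⟨Lᶜ ∩ {x | x ≤ y' x} ∩ {x | ∀ b < x, x ∈ Ha b},
          Filter.inter_mem (Filter.inter_mem hLc hge) hdiag, Or.inl ?_⟩
        intro d hd hmem
        obtain ⟨ht1, ht2, ht3, _⟩ := htail d hd (fun i => (hmem i).2)
        rw [ht3, hy'spec (d 0) (hmem 0).1.1 (Fin.tail d) ht1 ht2]
        exact (hmem 0).1.2
end Row

section Normalize
variable {β : Type} [LinearOrder β] [WellFoundedLT β]

theorem small_not_mem {μ : Cardinal.{0}} {U : Ultrafilter β}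
    (hnp : ∀ a : β, {a} ∉ U)
    (hcomp : ∀ s : Set (Set β), (∀ t ∈ s, t ∈ U) → #s < μ → ⋂₀ s ∈ U)
    (X : Set β) (hX : #X < μ) : X ∉ U := by
  intro hXU
  have h1 : ⋂₀ ((fun x => ({x}ᶜ : Set β)) '' X) ∈ U := by
    refine hcomp _ ?_ (lt_of_le_of_lt Cardinal.mk_image_le hX)
    rintro t ⟨x, _, rfl⟩
    exact Ultrafilter.compl_mem_iff_notMem.2 (hnp x)
  have h2 : ⋂₀ ((fun x => ({x}ᶜ : Set β)) '' X) = Xᶜ := by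
    ext y
    simp only [Set.sInter_image, Set.mem_iInter, Set.mem_compl_iff, Set.mem_singleton_iff]
    constructor
    · intro h hy; exact h y hy rfl
    · rintro h x hx rfl; exact h hx
  rw [h2] at h1
  exact (Ultrafilter.compl_mem_iff_notMem.1 h1) hXU

theorem exists_normal_uf (μ : Cardinal.{0}) (hμ : ℵ₀ < μ) (hcard : μ ≤ #β)
    (U₀ : Ultrafilter β) (hnp : ∀ a : β, {a} ∉ U₀)
    (hcomp : ∀ s : Set (Set β), (∀ t ∈ s, t ∈ U₀) → #s < μ → ⋂₀ s ∈ U₀) :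
    ∃ V : Ultrafilter β,
      (∀ X : Set β, #X < μ → X ∉ V) ∧
      (∀ g : β → β, {x | g x < x} ∈ V → ∃ y, {x | g x = y} ∈ V) ∧
      (∀ s : Set (Set β), s.Countable → (∀ t ∈ s, t ∈ V) → ⋂₀ s ∈ V) := by
  classical
  -- countable completeness of U₀
  have hctbl : ∀ s : Set (Set β), s.Countable → (∀ t ∈ s, t ∈ U₀) → ⋂₀ s ∈ U₀ := by
    intro s hs hmem
    exact hcomp s hmem (lt_of_le_of_lt (Set.Countable.le_aleph0 hs) hμ)
  -- the relation on functions
  set r : (β → β) → (β → β) → Prop := fun f g => {x | f x < g x} ∈ U₀ with hr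
  have hwf : WellFounded r := by
    rw [WellFounded.wellFounded_iff_has_min]
    by_contra h
    push_neg at h
    obtain ⟨s, ⟨f0, hf0⟩, hnomin⟩ := h
    have hstep : ∀ f ∈ s, ∃ g ∈ s, r g f := by
      intro f hf
      obtain ⟨g, hg, hrgf⟩ := hnomin f hf
      exact ⟨g, hg, hrgf⟩
    -- build a descending sequence
    have : ∃ F : ℕ → (β → β), (∀ n, F n ∈ s) ∧ ∀ n, r (F (n + 1)) (F n) := by
      have hF : ∀ p : {f // f ∈ s}, ∃ q : {f // f ∈ s}, r q.1 p.1 := by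
        rintro ⟨f, hf⟩
        obtain ⟨g, hg, hrg⟩ := hstep f hf
        exact ⟨⟨g, hg⟩, hrg⟩
      choose next hnext using hF
      refine ⟨fun n => (next^[n] ⟨f0, hf0⟩).1, fun n => (next^[n] ⟨f0, hf0⟩).2, fun n => ?_⟩
      show r (next^[n + 1] ⟨f0, hf0⟩).1 (next^[n] ⟨f0, hf0⟩).1
      rw [Function.iterate_succ_apply']
      exact hnext _
    obtain ⟨F, hFs, hFdesc⟩ := this
    have hint : ⋂₀ (Set.range fun n => {x | F (n + 1) x < F n x}) ∈ U₀ := by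
      refine hctbl _ (Set.countable_range _) ?_
      rintro t ⟨n, rfl⟩
      exact hFdesc n
    obtain ⟨x, hx⟩ := Ultrafilter.nonempty_of_mem hint
    have hdesc : ∀ n, F (n + 1) x < F n x := by
      intro n
      exact hx _ ⟨n, rfl⟩
    exact (RelEmbedding.natGT (fun n => F n x) hdesc).not_wellFounded
      (IsWellFounded.wf)
  -- minimal non-constant function
  set P : Set (β → β) := {f | ∀ y : β, {x | f x = y} ∉ U₀} with hP
  have hPne : P.Nonempty := by
    refine ⟨id, fun y => ?_⟩
    have : {x | id x = y} = {y} := by ext x; simp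
    rw [this]; exact hnp y
  set f₀ : β → β := hwf.min P hPne with hf₀
  have hf₀P : f₀ ∈ P := hwf.min_mem P hPne
  have hf₀min : ∀ h ∈ P, ¬ r h f₀ := fun h hh => hwf.not_lt_min P hh
  refine ⟨U₀.map f₀, ?_, ?_, ?_⟩
  · -- small sets
    intro X hX hXV
    rw [Ultrafilter.mem_map] at hXV
    have h1 : ⋂₀ ((fun y => {x | f₀ x ≠ y}) '' X) ∈ U₀ := by
      refine hcomp _ ?_ (lt_of_le_of_lt Cardinal.mk_image_le hX)
      rintro t ⟨y, _, rfl⟩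
      exact Ultrafilter.compl_mem_iff_notMem.2 (hf₀P y)
    have h2 : ⋂₀ ((fun y => {x | f₀ x ≠ y}) '' X) = (f₀ ⁻¹' X)ᶜ := by
      ext z
      simp only [Set.sInter_image, Set.mem_iInter, Set.mem_setOf_eq, Set.mem_compl_iff,
        Set.mem_preimage]
      constructor
      · intro h hz; exact h _ hz rfl
      · rintro h y hy rfl; exact h hy
    rw [h2] at h1
    exact (Ultrafilter.compl_mem_iff_notMem.1 h1) hXV
  · -- normality
    intro g hg
    rw [Ultrafilter.mem_map] at hg
    have hgf : r (g ∘ f₀) f₀ := hg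
    have : g ∘ f₀ ∉ P := fun h => hf₀min _ h hgf
    simp only [hP, Set.mem_setOf_eq, not_forall, not_not] at this
    obtain ⟨y, hy⟩ := this
    refine ⟨y, ?_⟩
    rw [Ultrafilter.mem_map]
    exact hy
  · -- countable completeness
    intro s hs hmem
    rw [Ultrafilter.mem_map, Set.preimage_sInter]
    have : ⋂ t ∈ s, f₀ ⁻¹' t = ⋂₀ ((fun t => f₀ ⁻¹' t) '' s) := by
      rw [Set.sInter_image]
    rw [this]
    refine hctbl _ (hs.image _) ?_
    rintro t ⟨u, hu, rfl⟩
    have := hmem u hu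
    rwa [Ultrafilter.mem_map] at this
end Normalize


section Rank
variable {α : Type} [LinearOrder α] [WellFoundedLT α]

/-- The order type of a well-ordered type. -/
noncomputable def myType (α : Type) [LinearOrder α] [WellFoundedLT α] : Ordinal :=
  Ordinal.type ((· < ·) : α → α → Prop)

theorem myType_toType (o : Ordinal) : myType o.ToType = o := Ordinal.type_toType o

theorem ordRank_lt_myType (a : α) : ordRank a < myType α := Ordinal.typein_lt_type _ a

theorem ordRank_lt_ordRank {a b : α} : ordRank a < ordRank b ↔ a < b :=
  Ordinal.typein_lt_typein _

theorem ordRank_surj {o : Ordinal} (h : o < myType α) : ∃ a : α, ordRank a = o :=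
  Ordinal.typein_surj _ h

theorem exists_relIso_initialSeg {β : Type} [LinearOrder β] [WellFoundedLT β] (a : α)
    (h : myType β = ordRank a) :
    Nonempty (((· < ·) : β → β → Prop) ≃r Subrel ((· < ·) : α → α → Prop) {b | b < a}) := by
  apply Ordinal.type_eq.1
  exact h

theorem ord_le_setOrderType {δ : Cardinal.{0}} {X : Set α} (h : δ ≤ #X) :
    δ.ord ≤ setOrderType X := by
  rw [setOrderType, Cardinal.ord_le, Ordinal.card_type]
  exact h

theorem exists_embedding_of_le {γ : Type} [LinearOrder γ] [WellFoundedLT γ] {X : Set α}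
    (h : myType γ ≤ setOrderType X) :
    Nonempty (((· < ·) : γ → γ → Prop) ↪r Subrel ((· < ·) : α → α → Prop) X) :=
  Ordinal.type_le_iff'.1 h

theorem setOrderType_range {γ : Type} [LinearOrder γ] [WellFoundedLT γ] {k : γ → α}
    (hk : ∀ {t t' : γ}, k t < k t' ↔ t < t')
    (hkinj : Function.Injective k) :
    setOrderType (Set.range k) = myType γ := by
  have hiso : ((· < ·) : γ → γ → Prop) ≃r
      Subrel ((· < ·) : α → α → Prop) (Set.range k) := by
    refine ⟨Equiv.ofInjective k hkinj, ?_⟩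
    intro t t'
    show ((Equiv.ofInjective k hkinj) t).1 < ((Equiv.ofInjective k hkinj) t').1 ↔ t < t'
    simp only [Equiv.ofInjective_apply]
    exact hk
  rw [setOrderType, ← hiso.ordinal_type_eq]
  rfl
end Rank

section Transport
variable {M : Type} [LinearOrder M] [WellFoundedLT M]
variable {β : Type} [LinearOrder β] [WellFoundedLT β]

theorem transport_uf (μ : Cardinal.{0}) (hμ : ℵ₀ < μ)
    (htype : myType β = μ.ord) (a : M)
    (j : ((· < ·) : β → β → Prop) ≃r Subrel ((· < ·) : M → M → Prop) {b | b < a})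
    (V : Ultrafilter β)
    (v1 : ∀ X : Set β, #X < μ → X ∉ V)
    (v2 : ∀ g : β → β, {x | g x < x} ∈ V → ∃ y, {x | g x = y} ∈ V)
    (v3 : ∀ s : Set (Set β), s.Countable → (∀ t ∈ s, t ∈ V) → ⋂₀ s ∈ V) :
    ∃ U : Ultrafilter M,
      Set.Iio a ∈ U ∧
      (∀ x, x < a → {y | x < y} ∈ U) ∧
      (∀ g : M → M, {x | g x < x} ∈ U → ∃ y, {x | g x = y} ∈ U) ∧
      (∀ s : Set (Set M), s.Countable → (∀ t ∈ s, t ∈ U) → ⋂₀ s ∈ U) ∧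
      (∀ X : Set M, X ∈ U → μ ≤ #X) := by
  classical
  set e : β → M := fun b => (j b).1 with he
  have hemono : ∀ {b b' : β}, e b < e b' ↔ b < b' := by
    intro b b'
    constructor
    · intro h
      exact j.map_rel_iff.1 h
    · intro h
      exact j.map_rel_iff.2 h
  have herange : ∀ b, e b < a := fun b => (j b).2
  have hesurj : ∀ x, x < a → ∃ b, e b = x := by
    intro x hx
    refine ⟨j.symm ⟨x, hx⟩, ?_⟩
    have := j.apply_symm_apply ⟨x, hx⟩
    rw [he]
    exact congrArg Subtype.val this
  refine ⟨V.map e, ?_, ?_, ?_, ?_, ?_⟩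
  · rw [Ultrafilter.mem_map]
    have : e ⁻¹' Set.Iio a = Set.univ := by
      ext b; simp [Set.mem_preimage, herange b]
    rw [this]; exact Filter.univ_mem
  · intro x hx
    rw [Ultrafilter.mem_map]
    obtain ⟨b₀, rfl⟩ := hesurj x hx
    have h1 : e ⁻¹' {y | e b₀ < y} = {b | b₀ < b} := by
      ext b; simp [Set.mem_preimage, hemono]
    rw [h1]
    have h2 : {b | b₀ < b} = (Set.Iic b₀)ᶜ := by ext b; simp [not_le]
    rw [h2]
    refine Ultrafilter.compl_mem_iff_notMem.2 (v1 _ ?_)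
    -- #(Iic b₀) < μ
    calc #(Set.Iic b₀) = #(insert b₀ (Set.Iio b₀) : Set β) := by
          rw [Set.Iio_insert]
      _ ≤ #(Set.Iio b₀) + 1 := Cardinal.mk_insert_le
      _ < μ := by
          refine Cardinal.add_lt_of_lt hμ.le ?_ (lt_of_lt_of_le one_lt_aleph0 hμ.le)
          have h3 : (Ordinal.typein ((· < ·) : β → β → Prop) b₀).card = #(Set.Iio b₀) :=
            Ordinal.card_typein b₀
          rw [← h3, ← Cardinal.lt_ord, ← htype]
          exact ordRank_lt_myType b₀
  · -- normality
    intro g hg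
    rw [Ultrafilter.mem_map] at hg
    set g' : β → β := fun b => if h : g (e b) < a then j.symm ⟨g (e b), h⟩ else b with hg'
    have hsub : e ⁻¹' {x | g x < x} ⊆ {b | g' b < b} := by
      intro b hb
      have hb' : g (e b) < e b := hb
      have hlt : g (e b) < a := lt_trans hb' (herange b)
      have hval : e (g' b) = g (e b) := by
        simp only [hg', he, dif_pos (show g (j b).1 < a from hlt)]
        exact congrArg Subtype.val (j.apply_symm_apply ⟨g (e b), hlt⟩)
      have : e (g' b) < e b := by rw [hval]; exact hb'
      exact hemono.1 this
    obtain ⟨t, ht⟩ := v2 g' (Filter.mem_of_superset hg hsub)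
    refine ⟨e t, ?_⟩
    rw [Ultrafilter.mem_map]
    refine Filter.mem_of_superset (Filter.inter_mem ht hg) ?_
    rintro b ⟨hbt, hbg⟩
    have hb' : g (e b) < e b := hbg
    have hlt : g (e b) < a := lt_trans hb' (herange b)
    have hval : e (g' b) = g (e b) := by
      simp only [hg', he, dif_pos (show g (j b).1 < a from hlt)]
      exact congrArg Subtype.val (j.apply_symm_apply ⟨g (e b), hlt⟩)
    show g (e b) = e t
    rw [← hval, hbt]
  · -- countable completeness
    intro s hs hmem
    rw [Ultrafilter.mem_map, Set.preimage_sInter, ← Set.sInter_image]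
    refine v3 _ (hs.image _) ?_
    rintro t ⟨u, hu, rfl⟩
    have := hmem u hu
    rwa [Ultrafilter.mem_map] at this
  · -- largeness
    intro X hX
    rw [Ultrafilter.mem_map] at hX
    by_contra h
    push_neg at h
    refine v1 (e ⁻¹' X) ?_ hX
    have hinj : Function.Injective e := by
      intro b b' hbb
      rcases lt_trichotomy b b' with hlt | heq | hgt
      · exact absurd (hemono.2 hlt) (by rw [hbb]; exact lt_irrefl _)
      · exact heq
      · exact absurd (hemono.2 hgt) (by rw [hbb]; exact lt_irrefl _)
    calc #(e ⁻¹' X) = #(e '' (e ⁻¹' X)) := (Cardinal.mk_image_eq hinj).symm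
      _ ≤ #X := Cardinal.mk_le_mk_of_subset (Set.image_preimage_subset e X)
      _ < μ := h
end Transport

section Club
variable {M : Type} [LinearOrder M] [WellFoundedLT M]

theorem club_mem_uf {U : Ultrafilter M} {a : M}
    (u0 : Set.Iio a ∈ U)
    (u1 : ∀ x, x < a → {y | x < y} ∈ U)
    (u2 : ∀ g : M → M, {x | g x < x} ∈ U → ∃ y, {x | g x = y} ∈ U)
    {C : Set M}
    (hCcl : ∀ x : M, (∃ b, b < x) → (∀ b < x, ∃ c ∈ C, b < c ∧ c < x) → x ∈ C)
    (hne : ∃ b, b < a)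
    (hCa : ∀ b < a, ∃ c ∈ C, b < c ∧ c < a) :
    C ∩ Set.Iio a ∈ U := by
  classical
  obtain ⟨b₁, hb₁⟩ := hne
  obtain ⟨c₀, hc₀C, _, hc₀a⟩ := hCa b₁ hb₁
  by_contra h
  have hc : (C ∩ Set.Iio a)ᶜ ∈ U := Ultrafilter.compl_mem_iff_notMem.2 h
  set Z : Set M := (C ∩ Set.Iio a)ᶜ ∩ Set.Iio a ∩ {x | c₀ < x} with hZ
  have hZU : Z ∈ U := Filter.inter_mem (Filter.inter_mem hc u0) (u1 c₀ hc₀a)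
  have hZprop : ∀ x ∈ Z, x ∉ C ∧ x < a ∧ c₀ < x := by
    rintro x ⟨⟨hx1, hx2⟩, hx3⟩
    refine ⟨fun hxC => hx1 ⟨hxC, hx2⟩, hx2, hx3⟩
  -- for x ∈ Z, the set C ∩ Iio x is nonempty and bounded
  have hkey : ∀ x ∈ Z, ∃ z, z ∈ C ∧ z < x ∧ ∀ y ∈ C ∩ Set.Iio x, y ≤ z := by
    intro x hx
    obtain ⟨hxC, hxa, hxc₀⟩ := hZprop x hx
    have hbd : ∃ u, ∀ y ∈ C ∩ Set.Iio x, y ≤ u := ⟨x, fun y hy => le_of_lt hy.2⟩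
    set z := mylub (C ∩ Set.Iio x) hbd with hz
    have hc₀z : c₀ ≤ z := le_mylub hbd ⟨hc₀C, hxc₀⟩
    have hzx : z ≤ x := mylub_le hbd (fun y hy => le_of_lt hy.2)
    have hzC : z ∈ C := by
      by_cases hzs : z ∈ C ∩ Set.Iio x
      · exact hzs.1
      · refine hCcl z ⟨c₀, lt_of_le_of_ne hc₀z (fun hq => hzs (hq ▸ ⟨hc₀C, hxc₀⟩))⟩ ?_
        intro b hb
        obtain ⟨y, hy, hby⟩ := lt_mylub hbd hb
        refine ⟨y, hy.1, hby, lt_of_le_of_ne (le_mylub hbd hy) ?_⟩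
        intro hq
        exact hzs (hq ▸ hy)
    have hzltx : z < x := lt_of_le_of_ne hzx (fun hq => hxC (hq ▸ hzC))
    exact ⟨z, hzC, hzltx, fun y hy => le_mylub hbd hy⟩
  choose zf hzf using hkey
  set g : M → M := fun x => if hx : x ∈ Z then zf x hx else x with hg
  have hglt : {x | g x < x} ∈ U := by
    refine Filter.mem_of_superset hZU (fun x hx => ?_)
    simp only [Set.mem_setOf_eq, hg, dif_pos hx]
    exact (hzf x hx).2.1
  obtain ⟨γ, hγ⟩ := u2 g hglt
  have hWU : {x | g x = γ} ∩ Z ∈ U := Filter.inter_mem hγ hZU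
  obtain ⟨xbar, hxbar⟩ := Ultrafilter.nonempty_of_mem hWU
  have hγa : γ < a := by
    obtain ⟨hx1, hx2⟩ := hxbar
    simp only [Set.mem_setOf_eq] at hx1
    have : g xbar = zf xbar hx2 := dif_pos hx2
    rw [this] at hx1
    exact lt_trans (hx1 ▸ (hzf xbar hx2).2.1) (hZprop xbar hx2).2.1
  obtain ⟨c₁, hc₁C, hγc₁, hc₁a⟩ := hCa γ hγa
  obtain ⟨x, hx⟩ := Ultrafilter.nonempty_of_mem
    (Filter.inter_mem hWU (u1 c₁ hc₁a))
  obtain ⟨⟨hx1, hx2⟩, hx3⟩ := hx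
  simp only [Set.mem_setOf_eq] at hx1
  have hgx : g x = zf x hx2 := dif_pos hx2
  have : c₁ ≤ zf x hx2 := (hzf x hx2).2.2 c₁ ⟨hc₁C, hx3⟩
  rw [← hgx, hx1] at this
  exact absurd hγc₁ (not_lt.2 this)
end Club


section Ctbl
open FirstOrder

theorem definableFun_countable (L : FirstOrder.Language.{0,0}) {M : Type} [L.Structure M]
    (hL : Countable L.Symbols) (n : ℕ) :
    {f : (Fin (n + 1) → M) → M | DefinableFun L (∅ : Set M) (n + 1) f}.Countable := by
  classical
  -- formulas are countable
  have hcard : #(L[[(∅ : Set M)]].Formula (Fin (n + 2))) ≤ ℵ₀ := by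
    have h1 : #(Σ k, L[[(∅ : Set M)]].BoundedFormula (Fin (n + 2)) k) ≤
        max ℵ₀ (Cardinal.lift.{0} #(Fin (n + 2)) + Cardinal.lift.{0} (L[[(∅ : Set M)]].card)) :=
      Language.BoundedFormula.card_le
    have h2 : (L[[(∅ : Set M)]].card) ≤ ℵ₀ := by
      rw [Language.card_withConstants]
      have h3 : L.card ≤ ℵ₀ := by
        rw [Language.card]
        exact Cardinal.mk_le_aleph0
      have h4 : #(∅ : Set M) = 0 := Cardinal.mk_emptyCollection M
      simp only [Cardinal.lift_id, h4, add_zero]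
      exact h3
    have h5 : #(L[[(∅ : Set M)]].Formula (Fin (n + 2))) ≤
        #(Σ k, L[[(∅ : Set M)]].BoundedFormula (Fin (n + 2)) k) :=
      Cardinal.mk_le_of_injective
        (f := fun φ => (⟨0, φ⟩ : Σ k, L[[(∅ : Set M)]].BoundedFormula (Fin (n + 2)) k))
        (fun φ ψ h => by injection h)
    refine le_trans (le_trans h5 h1) ?_
    simp only [Cardinal.lift_id]
    refine max_le le_rfl (le_trans (add_le_add (Cardinal.lt_aleph0_of_finite _).le h2) ?_)
    simp
  haveI hctble : Countable (L[[(∅ : Set M)]].Formula (Fin (n + 2))) :=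
    Cardinal.mk_le_aleph0_iff.1 hcard
  -- map each definable function to its graph, which lies in the (countable) range of `setOf Realize`
  have hsub : {f : (Fin (n + 1) → M) → M | DefinableFun L (∅ : Set M) (n + 1) f} ⊆
      (fun f => {x : Fin (n + 2) → M | x (Fin.last (n + 1)) = f (fun i => x i.castSucc)}) ⁻¹'
        (Set.range fun φ : L[[(∅ : Set M)]].Formula (Fin (n + 2)) =>
          (setOf φ.Realize : Set (Fin (n + 2) → M))) := by
    intro f hf
    obtain ⟨φ, hφ⟩ := hf
    exact ⟨φ, hφ.symm⟩
  have hinj : Function.Injective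
      (fun f : (Fin (n + 1) → M) → M =>
        {x : Fin (n + 2) → M | x (Fin.last (n + 1)) = f (fun i => x i.castSucc)}) := by
    intro f g hfg
    funext v
    have hv : (fun i : Fin (n + 1) => (Fin.snoc v (f v) : Fin (n + 2) → M) i.castSucc) = v := by
      funext i
      simp [Fin.snoc_castSucc]
    have hmem : (Fin.snoc v (f v) : Fin (n + 2) → M) ∈
        {x : Fin (n + 2) → M | x (Fin.last (n + 1)) = f (fun i => x i.castSucc)} := by
      simp only [Set.mem_setOf_eq, Fin.snoc_last, hv]
    have hfg' : {x : Fin (n + 2) → M | x (Fin.last (n + 1)) = f (fun i => x i.castSucc)} =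
        {x : Fin (n + 2) → M | x (Fin.last (n + 1)) = g (fun i => x i.castSucc)} := hfg
    rw [hfg'] at hmem
    simp only [Set.mem_setOf_eq, Fin.snoc_last, hv] at hmem
    exact hmem
  have hrc : (Set.range fun φ : L[[(∅ : Set M)]].Formula (Fin (n + 2)) =>
      (setOf φ.Realize : Set (Fin (n + 2) → M))).Countable := Set.countable_range _
  exact Set.Countable.mono hsub (hrc.preimage hinj)
end Ctbl

/-- If `η` is a regular uncountable cardinal such that the set of measurable cardinals
below `η` is stationary in `η`, then for every uncountable regular cardinal `δ < η`,
`η` is `δ`-Erdős. -/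
theorem erdos_of_stationary_measurables
    (η : Cardinal.{0}) (hη : η.IsRegular) (hη' : ℵ₀ < η)
    (hstat : ∀ C : Set η.ord.ToType, IsClubIn C →
      ({a : η.ord.ToType | ∃ μ : Cardinal.{0}, IsMeasurableCard μ ∧ ordRank a = μ.ord}
        ∩ C).Nonempty)
    (δ : Cardinal.{0}) (hδ : δ.IsRegular) (hδ' : ℵ₀ < δ) (hδη : δ < η) :
    IsErdos δ η := by
  classical
  intro L _inst hLsym C hC
  -- basic facts about the universe
  have htype : myType η.ord.ToType = η.ord := myType_toType _
  have hlimit : Order.IsSuccLimit (η.ord) := Cardinal.isSuccLimit_ord hη'.le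
  have hnomax : ∀ x : η.ord.ToType, ∃ y, x < y := by
    intro x
    have h0 : ordRank x < η.ord := lt_of_lt_of_eq (ordRank_lt_myType x) htype
    have h1 : Order.succ (ordRank x) < myType η.ord.ToType :=
      lt_of_lt_of_eq (hlimit.succ_lt h0) htype.symm
    obtain ⟨y, hy⟩ := ordRank_surj h1
    refine ⟨y, ?_⟩
    apply ordRank_lt_ordRank.1
    rw [hy]
    exact Order.lt_succ _
  have hctblbd : ∀ s : ℕ → η.ord.ToType, ∃ u, ∀ n, s n < u := by
    intro s
    have h1 : (⨆ n, Order.succ (ordRank (s n))) < η.ord := by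
      apply Ordinal.iSup_lt_ord
      · rw [Cardinal.IsRegular.cof_eq hη]
        simpa using hη'
      · intro n
        exact hlimit.succ_lt (lt_of_lt_of_eq (ordRank_lt_myType (s n)) htype)
    have h2 : (⨆ n, Order.succ (ordRank (s n))) < myType η.ord.ToType :=
      lt_of_lt_of_eq h1 htype.symm
    obtain ⟨u, hu⟩ := ordRank_surj h2
    refine ⟨u, fun n => ?_⟩
    apply ordRank_lt_ordRank.1
    rw [hu]
    exact lt_of_lt_of_le (Order.lt_succ _) (Ordinal.le_iSup _ n)
  -- the δ-th element
  have hδord : δ.ord < η.ord := Cardinal.ord_lt_ord.2 hδη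
  have hδord2 : δ.ord < myType η.ord.ToType := lt_of_lt_of_eq hδord htype.symm
  obtain ⟨e, he⟩ := ordRank_surj hδord2
  -- elements of C above any point
  have hCup : ∀ x : η.ord.ToType, ∃ c ∈ C, x < c := by
    intro x
    obtain ⟨y, hy⟩ := hnomax x
    obtain ⟨c, hcC, hyc⟩ := hC.1 y
    exact ⟨c, hcC, lt_of_lt_of_le hy hyc⟩
  -- the club of limit points of C above e
  set Lim : Set η.ord.ToType :=
    {x | (∃ b, b < x) ∧ ∀ b < x, ∃ c ∈ C, b < c ∧ c < x} with hLimdef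
  set C' : Set η.ord.ToType := Lim ∩ {x | e < x} with hC'def
  have hC'club : IsClubIn C' := by
    constructor
    · -- unbounded
      intro b
      obtain ⟨z₀, hz₀⟩ := hnomax (max b e)
      choose nxt hnxtC hnxtlt using hCup
      set seq : ℕ → η.ord.ToType := fun n => nxt^[n + 1] z₀ with hseqdef
      have hseqC : ∀ n, seq n ∈ C := by
        intro n
        show nxt^[n + 1] z₀ ∈ C
        rw [Function.iterate_succ_apply']
        exact hnxtC _
      have hseqmono : ∀ n, seq n < seq (n + 1) := by
        intro n
        show nxt^[n + 1] z₀ < nxt^[n + 2] z₀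
        rw [Function.iterate_succ_apply' nxt (n + 1)]
        exact hnxtlt _
      have hz₀seq : z₀ < seq 0 := hnxtlt z₀
      obtain ⟨u, hu⟩ := hctblbd seq
      have hbd : ∃ v, ∀ y ∈ Set.range seq, y ≤ v := ⟨u, by rintro y ⟨n, rfl⟩; exact (hu n).le⟩
      set z := mylub (Set.range seq) hbd with hzdef
      have hseqz : ∀ n, seq n ≤ z := fun n => le_mylub hbd ⟨n, rfl⟩
      have hz₀z : z₀ < z := lt_of_lt_of_le hz₀seq (hseqz 0)
      have hbz : b < z := lt_of_le_of_lt (le_max_left b e) (lt_trans hz₀ hz₀z)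
      have hez : e < z := lt_of_le_of_lt (le_max_right b e) (lt_trans hz₀ hz₀z)
      have hzLim : z ∈ Lim := by
        refine ⟨⟨z₀, hz₀z⟩, fun b' hb' => ?_⟩
        obtain ⟨y, ⟨n, rfl⟩, hb'y⟩ := lt_mylub hbd hb'
        exact ⟨seq n, hseqC n, hb'y, lt_of_lt_of_le (hseqmono n) (hseqz (n + 1))⟩
      exact ⟨z, ⟨hzLim, hez⟩, hbz.le⟩
    · -- closed
      intro x hne hlt
      have hxLim : x ∈ Lim := by
        refine ⟨hne, fun b hb => ?_⟩
        obtain ⟨c', ⟨hc'Lim, _⟩, hbc', hc'x⟩ := hlt b hb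
        obtain ⟨c, hcC, hbc, hcc'⟩ := hc'Lim.2 b hbc'
        exact ⟨c, hcC, hbc, lt_trans hcc' hc'x⟩
      obtain ⟨b, hb⟩ := hne
      obtain ⟨c', ⟨_, hec'⟩, _, hc'x⟩ := hlt b hb
      exact ⟨hxLim, lt_trans hec' hc'x⟩
  -- get a measurable point
  obtain ⟨a, ⟨⟨μ, hμmeas, hrank⟩, haLim, hea⟩⟩ := hstat C' hC'club
  obtain ⟨hμℵ, U₀, hnp, hcomp⟩ := hμmeas
  -- δ < μ
  have hδμ : δ < μ := by
    rw [← Cardinal.ord_lt_ord]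
    have h1 : ordRank e < ordRank a := ordRank_lt_ordRank.2 hea
    rw [he, hrank] at h1
    exact h1
  -- the isomorphism between μ.ord.ToType and the initial segment below a
  obtain ⟨j⟩ := exists_relIso_initialSeg (β := μ.ord.ToType) a
    ((myType_toType μ.ord).trans hrank.symm)
  -- normalize the ultrafilter
  obtain ⟨V, v1, v2, v3⟩ := exists_normal_uf μ hμℵ
    (le_of_eq (Cardinal.mk_ord_toType μ).symm) U₀ hnp hcomp
  -- transport it to η.ord.ToType
  obtain ⟨U, u0, u1, u2, u3, u4⟩ := transport_uf μ hμℵ (myType_toType μ.ord) a j V v1 v2 v3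
  -- the club below a is in U
  have hclubU : C ∩ Set.Iio a ∈ U :=
    club_mem_uf u0 u1 u2 hC.2 haLim.1 haLim.2
  -- Rowbottom sets for each definable function
  have hrow := fun (n : ℕ) (f : (Fin (n + 1) → η.ord.ToType) → η.ord.ToType) =>
    rowbottom u2 n f
  choose Hf hHfU hHfdich using hrow
  set T : Set (Set η.ord.ToType) :=
    ⋃ n, (fun f => Hf n f) '' {f | DefinableFun L (∅ : Set η.ord.ToType) (n + 1) f} with hTdef
  have hTctble : T.Countable :=
    Set.countable_iUnion fun n => (definableFun_countable L hLsym n).image _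
  set S : Set (Set η.ord.ToType) := insert (C ∩ Set.Iio a) T with hSdef
  have hSc : S.Countable := hTctble.insert _
  have hSU : ∀ t ∈ S, t ∈ U := by
    rintro t (rfl | ht)
    · exact hclubU
    · obtain ⟨n, hn⟩ := Set.mem_iUnion.1 ht
      obtain ⟨f, _, rfl⟩ := hn
      exact hHfU n f
  have hXU : ⋂₀ S ∈ U := u3 S hSc hSU
  set X : Set η.ord.ToType := ⋂₀ S with hXdef
  have hXC : X ⊆ C ∩ Set.Iio a := Set.sInter_subset_of_mem (Set.mem_insert _ _)
  -- X has order type at least δ.ord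
  have hdord : δ.ord ≤ setOrderType X := ord_le_setOrderType (le_trans hδμ.le (u4 X hXU))
  rw [← myType_toType δ.ord] at hdord
  obtain ⟨emb⟩ := exists_embedding_of_le hdord
  set k : δ.ord.ToType → η.ord.ToType := fun t => (emb t).1 with hkdef
  have hkmono : ∀ {t t' : δ.ord.ToType}, k t < k t' ↔ t < t' := fun {t t'} => emb.map_rel_iff
  have hkinj : Function.Injective k := by
    intro t t' h
    rcases lt_trichotomy t t' with hlt | heq | hgt
    · exact absurd (hkmono.2 hlt) (by rw [h]; exact lt_irrefl _)
    · exact heq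
    · exact absurd (hkmono.2 hgt) (by rw [h]; exact lt_irrefl _)
  set D : Set η.ord.ToType := Set.range k with hDdef
  have hDX : D ⊆ X := by rintro _ ⟨t, rfl⟩; exact (emb t).2
  have hDC : D ⊆ C := fun x hx => (hXC (hDX hx)).1
  -- order type of D is δ.ord
  have hDtype : setOrderType D = δ.ord := by
    rw [hDdef, setOrderType_range hkmono hkinj, myType_toType]
  refine ⟨D, hDC, hDtype, ?_⟩
  -- normal indiscernibles
  intro n f hdef
  have hfT : Hf n f ∈ S := by
    refine Set.mem_insert_of_mem _ (Set.mem_iUnion.2 ⟨n, ?_⟩)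
    exact Set.mem_image_of_mem _ hdef
  have hDH : D ⊆ Hf n f := fun x hx => (hDX hx) (Hf n f) hfT
  rcases hHfdich n f with h | ⟨y, h⟩
  · exact Or.inl fun d hd hdD => h d hd (fun i => hDH (hdD i))
  · exact Or.inr ⟨y, fun d hd hdD => h d hd (fun i => hDH (hdD i))⟩
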